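/- For every a ∈ M, crd(a) ⊆ dcl_{R^eq}(a). -/

import Mathlib

open FirstOrder FirstOrder.Language

namespace Paper

/-- Two tuples have the same complete (first-order) type over ∅. -/
def SameType (L : FirstOrder.Language.{0,0}) (M : Type) [L.Structure M] {α : Type} (a b : α → M) : Prop :=
  ∀ φ : L.Formula α, φ.Realize a ↔ φ.Realize b

/-- Two tuples have the same complete type over the parameter set `C`. -/
def SameTypeOver (L : FirstOrder.Language.{0,0}) (M : Type) [L.Structure M] {α : Type} (a b : α → M)
    (C : Set M) : Prop :=
  ∀ (m : ℕ) (c : Fin m → M), (∀ i, c i ∈ C) →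
    ∀ φ : L.Formula (α ⊕ Fin m), φ.Realize (Sum.elim a c) ↔ φ.Realize (Sum.elim b c)

/-- The (model-theoretic) algebraic closure of `A` in `M`. -/
def acl (L : FirstOrder.Language.{0,0}) (M : Type) [L.Structure M] (A : Set M) : Set M :=
  { x | ∃ (m : ℕ) (c : Fin m → M), (∀ i, c i ∈ A) ∧
      ∃ φ : L.Formula (Fin 1 ⊕ Fin m),
        φ.Realize (Sum.elim (fun _ => x) c) ∧
        {y : M | φ.Realize (Sum.elim (fun _ => y) c)}.Finite }

/-- The definable closure of `A` in `M`. -/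
def dcl (L : FirstOrder.Language.{0,0}) (M : Type) [L.Structure M] (A : Set M) : Set M :=
  { x | ∃ (m : ℕ) (c : Fin m → M), (∀ i, c i ∈ A) ∧
      ∃ φ : L.Formula (Fin 1 ⊕ Fin m),
        {y : M | φ.Realize (Sum.elim (fun _ => y) c)} = {x} }

/-- A set of tuples is ∅-definable. -/
def ZDef (L : FirstOrder.Language.{0,0}) (M : Type) [L.Structure M] {α : Type} (S : Set (α → M)) : Prop :=
  ∃ φ : L.Formula α, ∀ v, v ∈ S ↔ φ.Realize v

/-- A subset of the universe is ∅-definable. -/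
def ZDefSet (L : FirstOrder.Language.{0,0}) (M : Type) [L.Structure M] (D : Set M) : Prop :=
  ∃ φ : L.Formula (Fin 1), ∀ x : M, x ∈ D ↔ φ.Realize (fun _ => x)

/-- A finite relational vocabulary. -/
def FiniteRelational (L : FirstOrder.Language.{0,0}) : Prop :=
  (∀ n, IsEmpty (L.Functions n)) ∧ (∀ n, Finite (L.Relations n)) ∧
    {n | Nonempty (L.Relations n)}.Finite

/-- A finite relational vocabulary of maximal arity at most 2. -/
def BinaryLanguage (L : FirstOrder.Language.{0,0}) : Prop :=
  FiniteRelational L ∧ ∀ n, 3 ≤ n → IsEmpty (L.Relations n)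

/-- Every isomorphism between finite substructures extends to an automorphism. -/
def Homogeneous (L : FirstOrder.Language.{0,0}) (M : Type) [L.Structure M] : Prop :=
  ∀ (A B : L.Substructure M), (A : Set M).Finite → (B : Set M).Finite →
    ∀ f : ↥A ≃[L] ↥B, ∃ g : M ≃[L] M, ∀ a : ↥A, g (a : M) = (f a : M)

/-- ω-homogeneity. -/
def OmegaHomogeneous (L : FirstOrder.Language.{0,0}) (M : Type) [L.Structure M] : Prop :=
  ∀ (n : ℕ) (a b : Fin n → M) (a' : M), SameType L M a b →
    ∃ b' : M, SameType L M (Fin.snoc a a') (Fin.snoc b b')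

/-- ω-categoricity of `Th(M)`: there is exactly one countably infinite model up to
isomorphism. -/
def OmegaCategorical (L : FirstOrder.Language.{0,0}) (M : Type) [L.Structure M] : Prop :=
  (∃ (N : Type) (instN : L.Structure N),
    letI := instN
    N ⊨ L.completeTheory M ∧ Countable N ∧ Infinite N) ∧
  ∀ (N₁ N₂ : Type) (i₁ : L.Structure N₁) (i₂ : L.Structure N₂),
    letI := i₁
    letI := i₂
    N₁ ⊨ L.completeTheory M → N₂ ⊨ L.completeTheory M →
    Countable N₁ → Infinite N₁ → Countable N₂ → Infinite N₂ → Nonempty (N₁ ≃[L] N₂)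

/-- `φ(x̄, b̄)` divides over `B`: in some elementary extension there is a `B`-indiscernible
sequence of realizations of `tp(b̄/B)` starting a `k`-inconsistent family of instances. -/
def Divides (L : FirstOrder.Language.{0,0}) (M : Type) [L.Structure M] {n m : ℕ}
    (φ : L.Formula (Fin n ⊕ Fin m)) (b : Fin m → M) (B : Set M) : Prop :=
  ∃ (N : Type) (instN : L.Structure N),
    letI := instN
    ∃ (e : M ↪ₑ[L] N) (k : ℕ) (seq : ℕ → Fin m → N),
      2 ≤ k ∧
      SameTypeOver L N (seq 0) (⇑e ∘ b) (⇑e '' B) ∧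
      (∀ (r : ℕ) (s t : Fin r → ℕ), StrictMono s → StrictMono t →
        SameTypeOver L N (fun p : Fin r × Fin m => seq (s p.1) p.2)
          (fun p : Fin r × Fin m => seq (t p.1) p.2) (⇑e '' B)) ∧
      ∀ F : Finset ℕ, F.card = k →
        ¬∃ a : Fin n → N, ∀ i ∈ F, φ.Realize (Sum.elim a (seq i))

/-- `φ(x̄, b̄)` forks over `B`: it implies a finite disjunction of formulas dividing over `B`. -/
def Forks (L : FirstOrder.Language.{0,0}) (M : Type) [L.Structure M] {n m : ℕ}
    (φ : L.Formula (Fin n ⊕ Fin m)) (b : Fin m → M) (B : Set M) : Prop :=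
  ∃ (r : ℕ) (ms : Fin r → ℕ) (ψ : ∀ i : Fin r, L.Formula (Fin n ⊕ Fin (ms i)))
    (d : ∀ i : Fin r, Fin (ms i) → M),
    (∀ i, Divides L M (ψ i) (d i) B) ∧
    ∀ (N : Type) (instN : L.Structure N),
      letI := instN
      ∀ (e : M ↪ₑ[L] N) (a : Fin n → N),
        φ.Realize (Sum.elim a (⇑e ∘ b)) → ∃ i, (ψ i).Realize (Sum.elim a (⇑e ∘ d i))

/-- Nonforking independence: `A` is independent from `C` over `B`. -/
def Indep (L : FirstOrder.Language.{0,0}) (M : Type) [L.Structure M] (A B C : Set M) : Prop :=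
  ∀ (n m : ℕ) (a : Fin n → M) (c : Fin m → M), (∀ i, a i ∈ A) → (∀ i, c i ∈ B ∪ C) →
    ∀ φ : L.Formula (Fin n ⊕ Fin m), φ.Realize (Sum.elim a c) → ¬ Forks L M φ c B

/-- `SU(tp(a/B)) ≥ k`. -/
def SUge (L : FirstOrder.Language.{0,0}) : ℕ → ∀ (M : Type) (_ : L.Structure M), M → Set M → Prop
  | 0, _, _, _, _ => True
  | (k+1), M, instM, a, B =>
      letI := instM
      ∃ (N : Type) (instN : L.Structure N),
        letI := instN
        ∃ (e : M ↪ₑ[L] N) (a' : N) (C : Set N),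
          (⇑e '' B) ⊆ C ∧
          SameTypeOver L N (fun _ : Fin 1 => a') (fun _ : Fin 1 => e a) (⇑e '' B) ∧
          ¬ Indep L N {a'} (⇑e '' B) C ∧
          SUge L k N instN a' C

/-- `SU(tp(a/B)) = k`. -/
def SUeq (L : FirstOrder.Language.{0,0}) (M : Type) [instM : L.Structure M] (a : M) (B : Set M) (k : ℕ) :
    Prop :=
  SUge L k M instM a B ∧ ¬ SUge L (k+1) M instM a B

/-- The tree property for a theory. -/
def HasTreeProperty (L : FirstOrder.Language.{0,0}) (T : L.Theory) : Prop :=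
  ∃ (n m k : ℕ) (φ : L.Formula (Fin n ⊕ Fin m)) (N : Type) (instN : L.Structure N),
    letI := instN
    2 ≤ k ∧ N ⊨ T ∧
    ∃ b : List ℕ → Fin m → N,
      (∀ f : ℕ → ℕ, ∃ a : Fin n → N, ∀ l : ℕ,
        φ.Realize (Sum.elim a (b ((List.range l).map f)))) ∧
      (∀ (s : List ℕ) (F : Finset ℕ), F.card = k →
        ¬∃ a : Fin n → N, ∀ i ∈ F, φ.Realize (Sum.elim a (b (s ++ [i]))))

/-- A theory is simple iff no formula has the tree property. -/
def SimpleTheory (L : FirstOrder.Language.{0,0}) (T : L.Theory) : Prop := ¬ HasTreeProperty L T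

/-- 1-basedness (of a structure, e.g. of `M^eq`). -/
def OneBased (L : FirstOrder.Language.{0,0}) (M : Type) [L.Structure M] : Prop :=
  ∀ A B : Set M, Indep L M A (acl L M A ∩ acl L M B) B

/-- Trivial dependence (in a structure, e.g. in `M^eq`). -/
def TrivialDependence (L : FirstOrder.Language.{0,0}) (M : Type) [L.Structure M] : Prop :=
  ∀ A B C₁ C₂ : Set M, ¬ Indep L M A B (C₁ ∪ C₂) → (¬ Indep L M A B C₁ ∨ ¬ Indep L M A B C₂)

/-- `Meq` (with the function `incl` including the real sort, and a sort map `sortOf`)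
is an expansion of `M` by imaginary sorts, i.e. it has the characteristic properties of
`M^eq`. -/
structure IsEqExtension (L : FirstOrder.Language.{0,0}) (M : Type) [L.Structure M]
    (Leq : FirstOrder.Language.{0,0}) (Meq : Type) [Leq.Structure Meq]
    (incl : M → Meq) (SortIdx : Type) (sortOf : Meq → SortIdx) : Prop where
  incl_inj : Function.Injective incl
  real_definable : ZDefSet Leq Meq (Set.range incl)
  expansion : ∀ (n : ℕ) (φ : L.Formula (Fin n)), ∃ ψ : Leq.Formula (Fin n),
      ∀ v : Fin n → M, φ.Realize v ↔ ψ.Realize (incl ∘ v)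
  conservative : ∀ (n : ℕ) (ψ : Leq.Formula (Fin n)), ∃ φ : L.Formula (Fin n),
      ∀ v : Fin n → M, ψ.Realize (incl ∘ v) ↔ φ.Realize v
  sorts_definable : ∀ s : SortIdx, ZDefSet Leq Meq {x | sortOf x = s}
  codes : ∀ e : Meq, ∃ (n : ℕ) (a : Fin n → M), e ∈ dcl Leq Meq (Set.range (incl ∘ a))

/-- `Th(M)` is 1-based: in every imaginary expansion, any two sets are independent over the
intersection of their algebraic closures. -/
def OneBasedStructure (L : FirstOrder.Language.{0,0}) (M : Type) [L.Structure M] : Prop :=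
  ∀ (Leq : FirstOrder.Language.{0,0}) (Meq : Type) (instq : Leq.Structure Meq)
    (incl : M → Meq) (SortIdx : Type) (sortOf : Meq → SortIdx),
    letI := instq
    IsEqExtension L M Leq Meq incl SortIdx sortOf → OneBased Leq Meq

/-- `Th(M)` has trivial dependence (computed in imaginary expansions). -/
def TrivialDependenceStructure (L : FirstOrder.Language.{0,0}) (M : Type) [L.Structure M] : Prop :=
  ∀ (Leq : FirstOrder.Language.{0,0}) (Meq : Type) (instq : Leq.Structure Meq)
    (incl : M → Meq) (SortIdx : Type) (sortOf : Meq → SortIdx),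
    letI := instq
    IsEqExtension L M Leq Meq incl SortIdx sortOf → TrivialDependence Leq Meq

/-- `M` has height 1: there is a ∅-definable set `D` of imaginaries, representing only
finitely many sorts, consisting of elements of SU-rank 1, with `M ⊆ acl(D)`. -/
def HeightOne (L : FirstOrder.Language.{0,0}) (M : Type) [L.Structure M] : Prop :=
  ∀ (Leq : FirstOrder.Language.{0,0}) (Meq : Type) (instq : Leq.Structure Meq)
    (incl : M → Meq) (SortIdx : Type) (sortOf : Meq → SortIdx),
    letI := instq
    IsEqExtension L M Leq Meq incl SortIdx sortOf →
      ∃ D : Set Meq, ZDefSet Leq Meq D ∧ (sortOf '' D).Finite ∧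
        (∀ a : M, incl a ∈ acl Leq Meq D) ∧ ∀ d ∈ D, SUeq Leq Meq d ∅ 1

/-- A binary random structure: an infinite homogeneous binary structure such that no
minimal forbidden structure has at least 3 elements. -/
def IsBinaryRandom (L : FirstOrder.Language.{0,0}) (M : Type) [L.Structure M] : Prop :=
  BinaryLanguage L ∧ Infinite M ∧ Homogeneous L M ∧
  ∀ (A : Type) (instA : L.Structure A),
    letI := instA
    Finite A → 3 ≤ Nat.card A → IsEmpty (A ↪[L] M) →
      ∃ S : L.Substructure A, S ≠ ⊤ ∧ IsEmpty (↥S ↪[L] M)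

/-- `N` (an `LN`-structure) is strongly interpretable in `M` (an `LM`-structure). -/
def StronglyInterpretable (LN : FirstOrder.Language.{0,0}) (N : Type) [LN.Structure N]
    (LM : FirstOrder.Language.{0,0}) (M : Type) [LM.Structure M] : Prop :=
  ∃ (n : ℕ) (χ : LM.Formula (Fin n)) (f : {v : Fin n → M // χ.Realize v} → N),
    Function.Bijective f ∧
    ∀ (k : ℕ) (φ : LN.Formula (Fin k)), ∃ ψ : LM.Formula (Fin k × Fin n),
      ∀ a : Fin k → {v : Fin n → M // χ.Realize v},
        (ψ.Realize (fun p => (a p.1).val p.2) ↔ φ.Realize (fun i => f (a i)))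

/-- Primitivity: every ∅-definable equivalence relation on `M` is trivial. -/
def Primitive (L : FirstOrder.Language.{0,0}) (M : Type) [L.Structure M] : Prop :=
  ∀ E : M → M → Prop, Equivalence E →
    ZDef L M {v : Fin 2 → M | E (v 0) (v 1)} →
    (∀ a b : M, E a b → a = b) ∨ (∀ a b : M, E a b)

/-- The equivalence relation `acl_M(x) = acl_M(y)` on `M`, as a setoid. -/
def aclSetoid (L : FirstOrder.Language.{0,0}) (M : Type) [L.Structure M] : Setoid M :=
  ⟨fun a b => acl L M {a} = acl L M {b},
    ⟨fun _ => rfl, fun h => h.symm, fun h h' => h.trans h'⟩⟩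

/-- The coordinatization (★) of `M` by a chain `C_0 ⊆ C_1 ⊆ ... ⊆ C_r ⊆ C` of ∅-definable
sets of imaginaries. -/
def CoordChain (Leq : FirstOrder.Language.{0,0}) (Meq : Type) [Leq.Structure Meq] {M : Type}
    (incl : M → Meq) {SortIdx : Type} (sortOf : Meq → SortIdx)
    (r : ℕ) (C : Set Meq) (Cn : ℕ → Set Meq) : Prop :=
  ZDefSet Leq Meq C ∧ (∀ n, ZDefSet Leq Meq (Cn n)) ∧ Cn 0 = ∅ ∧
  (∀ n, n < r → Cn n ⊆ Cn (n+1)) ∧ Cn r ⊆ C ∧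
  (∀ a : M, incl a ∈ C) ∧ (sortOf '' C).Finite ∧
  (∀ n, n < r → ∀ a ∈ Cn (n+1), SUeq Leq Meq a (Cn n) 1) ∧
  (∀ n, n ≤ r → ∀ a ∈ Cn n, ∀ b : Meq,
    SameType Leq Meq (fun _ : Fin 1 => a) (fun _ : Fin 1 => b) → b ∈ Cn n) ∧
  (∀ e ∈ C, e ∈ acl Leq Meq (Cn r))


end Paper

namespace S16


lemma auto_extend {LR : FirstOrder.Language.{0,0}} {R : Type} [LR.Structure R]
    (hfun : ∀ n, IsEmpty (LR.Functions n)) (hhom : Paper.Homogeneous LR R)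
    (σ : R ≃ R) (A : Set R) (hA : A.Finite)
    (hrel : ∀ (n : ℕ) (r : LR.Relations n) (w : Fin n → R), (∀ i, w i ∈ A) →
      (Structure.RelMap r (⇑σ ∘ w) ↔ Structure.RelMap r w)) :
    ∃ g : R ≃[LR] R, ∀ a ∈ A, g a = σ a := by
  let SA : LR.Substructure R := ⟨A, fun {n} f => (hfun n).elim f⟩
  let SB : LR.Substructure R := ⟨σ '' A, fun {n} f => (hfun n).elim f⟩
  have hmemA : ∀ z, z ∈ SA ↔ z ∈ A := fun z => Iff.rfl
  have hmemB : ∀ z, z ∈ SB ↔ z ∈ σ '' A := fun z => Iff.rfl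
  let e : ↥SA ≃ ↥SB :=
    { toFun := fun u => ⟨σ u.val, ⟨u.val, u.prop, rfl⟩⟩
      invFun := fun u => ⟨σ.symm u.val, by
        obtain ⟨w, hw, he⟩ := u.prop
        rw [← he, Equiv.symm_apply_apply]; exact hw⟩
      left_inv := fun u => by simp
      right_inv := fun u => by simp }
  let f : ↥SA ≃[LR] ↥SB :=
    { toEquiv := e
      map_fun' := fun {n} F => (hfun n).elim F
      map_rel' := by
        intro n r v
        exact hrel n r (fun i => (v i).val) (fun i => (v i).prop) }
  obtain ⟨g, hg⟩ := hhom SA SB hA (hA.image σ) f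
  exact ⟨g, fun a ha => hg ⟨a, ha⟩⟩



lemma acl_one {Leq : FirstOrder.Language.{0,0}} {Meq : Type} [Leq.Structure Meq] {p x : Meq}
    (hx : x ∈ Paper.acl Leq Meq {p}) :
    ∃ φ : Leq.Formula (Fin 1 ⊕ Fin 1),
      φ.Realize (Sum.elim (fun _ => x) (fun _ => p)) ∧
      {y : Meq | φ.Realize (Sum.elim (fun _ => y) (fun _ => p))}.Finite := by
  obtain ⟨m, c, hc, φ, hφ, hfin⟩ := hx
  have hcomp : ∀ y : Meq,
      (Sum.elim (fun _ : Fin 1 => y) (fun _ : Fin 1 => p)) ∘ (Sum.map id fun _ => (0 : Fin 1))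
        = Sum.elim (fun _ : Fin 1 => y) c := by
    intro y; funext a
    rcases a with a | b
    · rfl
    · exact (hc b).symm
  refine ⟨φ.relabel (Sum.map id fun _ => (0 : Fin 1)), ?_, ?_⟩
  · rw [Formula.realize_relabel, hcomp]; exact hφ
  · have hset : {y : Meq | (φ.relabel (Sum.map id fun _ => (0 : Fin 1))).Realize
        (Sum.elim (fun _ => y) (fun _ => p))} = {y : Meq | φ.Realize (Sum.elim (fun _ => y) c)} := by
      ext y; simp only [Set.mem_setOf_eq, Formula.realize_relabel, hcomp]
    rw [hset]; exact hfin


lemma crd_finite {LR : FirstOrder.Language.{0,0}} {R : Type} [LR.Structure R]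
    {LeqR : FirstOrder.Language.{0,0}} {MeqR : Type} [LeqR.Structure MeqR]
    {inclR : R → MeqR}
    (hbinR : Paper.BinaryLanguage LR) (hhomR : Paper.Homogeneous LR R)
    (hinj : Function.Injective inclR)
    (hcons : ∀ (n : ℕ) (ψ : LeqR.Formula (Fin n)), ∃ φ : LR.Formula (Fin n),
      ∀ v : Fin n → R, ψ.Realize (inclR ∘ v) ↔ φ.Realize v)
    (p : MeqR) {m₀ : ℕ} (ct : Fin m₀ → R)
    (θ : LeqR.Formula (Fin 1 ⊕ Fin m₀))
    (hθ : {y : MeqR | θ.Realize (Sum.elim (fun _ => y) (inclR ∘ ct))} = {p}) :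
    (Paper.acl LeqR MeqR {p} ∩ Set.range inclR).Finite := by
  classical
  set X := Paper.acl LeqR MeqR {p} ∩ Set.range inclR with hX
  by_contra hXinf
  set Xt : Set R := {y : R | inclR y ∈ X} with hXtdef
  have hXsub : X ⊆ inclR '' Xt := by
    rintro x hx
    obtain ⟨y, hy⟩ := hx.2
    exact ⟨y, by simp only [Xt, Set.mem_setOf_eq, hy]; exact hx, hy⟩
  have hXtinf : Xt.Infinite := by
    intro hfin; exact hXinf ((hfin.image inclR).subset hXsub)
  have hXt' : (Xt \ Set.range ct).Infinite := hXtinf.diff (Set.finite_range ct)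
  haveI : Infinite ↥(Xt \ Set.range ct) := hXt'.to_subtype
  haveI : Finite (LR.Relations 1) := hbinR.1.2.1 1
  haveI : Finite (LR.Relations 2) := hbinR.1.2.1 2
  set pt : R → Option (Fin m₀) → R := fun y o => o.elim y ct with hptdef
  set qtp : R → ((LR.Relations 1 → Bool) ×
      (Option (Fin m₀) → Option (Fin m₀) → LR.Relations 2 → Bool)) :=
    fun y => (fun r => decide (Structure.RelMap r (fun _ : Fin 1 => y)),
      fun o₁ o₂ r => decide (Structure.RelMap r
        (fun i : Fin 2 => if i = 0 then pt y o₁ else pt y o₂))) with hqtpdef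
  obtain ⟨q, hq⟩ := Finite.exists_infinite_fiber
    (fun y : ↥(Xt \ Set.range ct) => qtp y.val)
  haveI := hq
  obtain ⟨y₀⟩ := (inferInstance : Nonempty ↥((fun y : ↥(Xt \ Set.range ct) => qtp y.val) ⁻¹' {q}))
  set x₀ : R := y₀.val.val with hx₀def
  have hx₀mem : x₀ ∈ Xt \ Set.range ct := y₀.val.prop
  have hx₀q : qtp x₀ = q := y₀.prop
  have hx₀X : inclR x₀ ∈ X := hx₀mem.1
  obtain ⟨ψ, hψx, hψfin⟩ := acl_one hx₀X.1
  -- the formula χ(w, c̄) := ∃ z (θ(z, c̄) ∧ ψ(w, z))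
  set gθ : Fin 1 ⊕ Fin m₀ → ((Fin 1 ⊕ Fin m₀) ⊕ Fin 1) :=
    Sum.elim (fun _ => Sum.inr 0) (fun i => Sum.inl (Sum.inr i)) with hgθ
  set gψ : Fin 1 ⊕ Fin 1 → ((Fin 1 ⊕ Fin m₀) ⊕ Fin 1) :=
    Sum.elim (fun _ => Sum.inl (Sum.inl 0)) (fun _ => Sum.inr 0) with hgψ
  set χ : LeqR.Formula (Fin 1 ⊕ Fin m₀) :=
    Formula.iExs (Fin 1) ((θ.relabel gθ) ⊓ (ψ.relabel gψ)) with hχdef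
  have hχ : ∀ w : MeqR, χ.Realize (Sum.elim (fun _ => w) (inclR ∘ ct)) ↔
      ψ.Realize (Sum.elim (fun _ => w) (fun _ => p)) := by
    intro w
    rw [hχdef, Formula.realize_iExs]
    constructor
    · rintro ⟨i, hi⟩
      have hi' : ((θ.relabel gθ) ⊓ (ψ.relabel gψ)).Realize
          (Sum.elim (Sum.elim (fun _ => w) (inclR ∘ ct)) i) := hi
      rw [Formula.realize_inf, Formula.realize_relabel, Formula.realize_relabel] at hi'
      obtain ⟨h1, h2⟩ := hi'
      have e1 : (Sum.elim (Sum.elim (fun _ : Fin 1 => w) (inclR ∘ ct)) i) ∘ gθ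
          = Sum.elim (fun _ : Fin 1 => i 0) (inclR ∘ ct) := by
        funext a; rcases a with a | b
        · simp [hgθ, Subsingleton.elim a 0]
        · rfl
      rw [e1] at h1
      have hip : i 0 = p := by
        have : i 0 ∈ {y : MeqR | θ.Realize (Sum.elim (fun _ => y) (inclR ∘ ct))} := h1
        rw [hθ] at this; exact this
      have e2 : (Sum.elim (Sum.elim (fun _ : Fin 1 => w) (inclR ∘ ct)) i) ∘ gψ
          = Sum.elim (fun _ : Fin 1 => w) (fun _ : Fin 1 => p) := by
        funext a; rcases a with a | b
        · simp [hgψ, Subsingleton.elim a 0]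
        · simp [hgψ, hip, Subsingleton.elim b 0]
      rwa [e2] at h2
    · intro h
      refine ⟨fun _ => p, ?_⟩
      show ((θ.relabel gθ) ⊓ (ψ.relabel gψ)).Realize
          (Sum.elim (Sum.elim (fun _ => w) (inclR ∘ ct)) (fun _ => p))
      rw [Formula.realize_inf, Formula.realize_relabel, Formula.realize_relabel]
      constructor
      · have e1 : (Sum.elim (Sum.elim (fun _ : Fin 1 => w) (inclR ∘ ct)) (fun _ : Fin 1 => p)) ∘ gθ
            = Sum.elim (fun _ : Fin 1 => p) (inclR ∘ ct) := by
          funext a; rcases a with a | b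
          · simp [hgθ]
          · rfl
        rw [e1]
        have : p ∈ {y : MeqR | θ.Realize (Sum.elim (fun _ => y) (inclR ∘ ct))} := by
          rw [hθ]; rfl
        exact this
      · have e2 : (Sum.elim (Sum.elim (fun _ : Fin 1 => w) (inclR ∘ ct)) (fun _ : Fin 1 => p)) ∘ gψ
            = Sum.elim (fun _ : Fin 1 => w) (fun _ : Fin 1 => p) := by
          funext a; rcases a with a | b
          · simp [hgψ]
          · simp [hgψ]
        rw [e2]; exact h
  obtain ⟨φc, hφc⟩ := hcons (1 + m₀) (χ.relabel ⇑finSumFinEquiv)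
  have key : ∀ y : R, y ∈ Xt \ Set.range ct → qtp y = qtp x₀ →
      ψ.Realize (Sum.elim (fun _ => inclR y) (fun _ => p)) := by
    intro y hy hqy
    by_cases hyx : y = x₀
    · rw [hyx]; exact hψx
    · set σ := Equiv.swap x₀ y with hσdef
      set A : Set R := insert x₀ (Set.range ct) with hAdef
      have h1 : ∀ r : LR.Relations 1, Structure.RelMap r (fun _ : Fin 1 => y) ↔
          Structure.RelMap r (fun _ : Fin 1 => x₀) := by
        intro r
        have := congrFun (congrArg Prod.fst hqy) r
        exact decide_eq_decide.mp this
      have h2 : ∀ (o₁ o₂ : Option (Fin m₀)) (r : LR.Relations 2),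
          Structure.RelMap r (fun i : Fin 2 => if i = 0 then pt y o₁ else pt y o₂) ↔
          Structure.RelMap r (fun i : Fin 2 => if i = 0 then pt x₀ o₁ else pt x₀ o₂) := by
        intro o₁ o₂ r
        have := congrFun (congrFun (congrFun (congrArg Prod.snd hqy) o₁) o₂) r
        exact decide_eq_decide.mp this
      have h1' : ∀ (o : Option (Fin m₀)) (r : LR.Relations 1),
          Structure.RelMap r (fun _ : Fin 1 => pt y o) ↔
          Structure.RelMap r (fun _ : Fin 1 => pt x₀ o) := by
        rintro (_ | k) r
        · exact h1 r
        · exact Iff.rfl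
      have hclass : ∀ z ∈ A, ∃ o : Option (Fin m₀), z = pt x₀ o ∧ σ z = pt y o := by
        intro z hz
        rcases hz with rfl | ⟨k, rfl⟩
        · exact ⟨none, rfl, by simp [hσdef, hptdef]⟩
        · refine ⟨some k, rfl, ?_⟩
          show σ (ct k) = ct k
          exact Equiv.swap_apply_of_ne_of_ne (fun h => hx₀mem.2 ⟨k, h⟩)
            (fun h => hy.2 ⟨k, h⟩)
      have hrel : ∀ (n : ℕ) (r : LR.Relations n) (w : Fin n → R), (∀ i, w i ∈ A) →
          (Structure.RelMap r (⇑σ ∘ w) ↔ Structure.RelMap r w) := by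
        intro n r w hw
        match n, r, w, hw with
        | 0, r, w, hw =>
          have : ⇑σ ∘ w = w := funext fun i => i.elim0
          rw [this]
        | 1, r, w, hw =>
          obtain ⟨o, ho1, ho2⟩ := hclass (w 0) (hw 0)
          have hw0 : w = fun _ : Fin 1 => w 0 := funext fun i => by rw [Subsingleton.elim i 0]
          have hσw : ⇑σ ∘ w = fun _ : Fin 1 => pt y o := by
            funext i; show σ (w i) = pt y o
            rw [Subsingleton.elim i 0, ho2]
          rw [hσw, hw0, ho1]
          exact h1' o r
        | 2, r, w, hw =>
          obtain ⟨o₀, ho₀1, ho₀2⟩ := hclass (w 0) (hw 0)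
          obtain ⟨o₁, ho₁1, ho₁2⟩ := hclass (w 1) (hw 1)
          have hσw : ⇑σ ∘ w = fun i : Fin 2 => if i = 0 then pt y o₀ else pt y o₁ := by
            funext i
            fin_cases i
            · show σ (w 0) = _; simp [ho₀2]
            · show σ (w 1) = _; simp [ho₁2]
          have hw' : w = fun i : Fin 2 => if i = 0 then pt x₀ o₀ else pt x₀ o₁ := by
            funext i
            fin_cases i
            · simpa using ho₀1
            · simpa using ho₁1
          rw [hσw, hw']
          exact h2 o₀ o₁ r
        | (n+3), r, w, hw => exact ((hbinR.2 (n+3) (by omega)).elim r)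
      obtain ⟨g, hg⟩ := auto_extend (hbinR.1.1) hhomR σ A ((Set.finite_range ct).insert x₀) hrel
      have hgx₀ : g x₀ = y := by
        rw [hg x₀ (Set.mem_insert _ _), hσdef]; exact Equiv.swap_apply_left x₀ y
      have hgc : ∀ k, g (ct k) = ct k := by
        intro k
        rw [hg (ct k) (Set.mem_insert_iff.mpr (Or.inr ⟨k, rfl⟩)), hσdef]
        exact Equiv.swap_apply_of_ne_of_ne (fun h => hx₀mem.2 ⟨k, h⟩)
          (fun h => hy.2 ⟨k, h⟩)
      -- transfer
      set V0 : Fin 1 ⊕ Fin m₀ → R := Sum.elim (fun _ => x₀) ct with hV0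
      set Vy : Fin 1 ⊕ Fin m₀ → R := Sum.elim (fun _ => y) ct with hVy
      have hgV : ⇑g ∘ V0 = Vy := by
        funext a; rcases a with a | k
        · exact hgx₀
        · exact hgc k
      have hcomp0 : inclR ∘ V0 = Sum.elim (fun _ : Fin 1 => inclR x₀) (inclR ∘ ct) := by
        funext a; rcases a with a | k <;> rfl
      have hcompy : inclR ∘ Vy = Sum.elim (fun _ : Fin 1 => inclR y) (inclR ∘ ct) := by
        funext a; rcases a with a | k <;> rfl
      have hrelabel : ∀ v : Fin 1 ⊕ Fin m₀ → R,
          (χ.relabel ⇑finSumFinEquiv).Realize (inclR ∘ (v ∘ ⇑finSumFinEquiv.symm)) ↔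
            χ.Realize (inclR ∘ v) := by
        intro v
        rw [Formula.realize_relabel]
        have : (inclR ∘ (v ∘ ⇑finSumFinEquiv.symm)) ∘ ⇑finSumFinEquiv = inclR ∘ v := by
          funext a; simp
        rw [this]
      have step1 : χ.Realize (inclR ∘ V0) := by
        rw [hcomp0, hχ]; exact hψx
      have step2 : φc.Realize (V0 ∘ ⇑finSumFinEquiv.symm) := by
        rw [← hφc]; rw [hrelabel]; exact step1
      have step3 : φc.Realize (Vy ∘ ⇑finSumFinEquiv.symm) := by
        have : ⇑g ∘ (V0 ∘ ⇑finSumFinEquiv.symm) = Vy ∘ ⇑finSumFinEquiv.symm := by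
          funext a; exact congrFun hgV _
        rw [← this, StrongHomClass.realize_formula]
        exact step2
      have step4 : χ.Realize (inclR ∘ Vy) := by
        rw [← hrelabel, hφc]; exact step3
      rw [hcompy, hχ] at step4
      exact step4
  -- contradiction with finiteness of the solution set of ψ
  haveI : Finite ↥{y : MeqR | ψ.Realize (Sum.elim (fun _ => y) (fun _ => p))} := hψfin.to_subtype
  have hfib : ∀ u : ↥((fun y : ↥(Xt \ Set.range ct) => qtp y.val) ⁻¹' {q}),
      ψ.Realize (Sum.elim (fun _ => inclR u.val.val) (fun _ => p)) := by
    intro u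
    refine key u.val.val u.val.prop ?_
    have h1 : qtp u.val.val = q := Set.mem_singleton_iff.mp u.prop
    rw [h1, hx₀q]
  have hembinj : Function.Injective
      (fun u : ↥((fun y : ↥(Xt \ Set.range ct) => qtp y.val) ⁻¹' {q}) =>
        (⟨inclR u.val.val, hfib u⟩ :
          ↥{y : MeqR | ψ.Realize (Sum.elim (fun _ => y) (fun _ => p))})) := by
    intro u v huv
    have : inclR u.val.val = inclR v.val.val := congrArg Subtype.val huv
    exact Subtype.ext (Subtype.ext (hinj this))
  haveI := Finite.of_injective _ hembinj
  exact not_finite ↥((fun y : ↥(Xt \ Set.range ct) => qtp y.val) ⁻¹' {q})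

noncomputable def iSupF {L : FirstOrder.Language} {α β : Type*} {n : ℕ} (s : Finset β)
    (f : β → L.BoundedFormula α n) : L.BoundedFormula α n :=
  BoundedFormula.iSup (fun b : s => f b)

noncomputable def iInfF {L : FirstOrder.Language} {α β : Type*} {n : ℕ} (s : Finset β)
    (f : β → L.BoundedFormula α n) : L.BoundedFormula α n :=
  BoundedFormula.iInf (fun b : s => f b)

theorem realize_iSupF {L : FirstOrder.Language} {M : Type*} [L.Structure M] {α β : Type*} {n : ℕ}
    (s : Finset β) (f : β → L.BoundedFormula α n) (v : α → M) (v' : Fin n → M) :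
    (iSupF s f).Realize v v' ↔ ∃ b ∈ s, (f b).Realize v v' := by
  simp [iSupF]

theorem realize_iInfF {L : FirstOrder.Language} {M : Type*} [L.Structure M] {α β : Type*} {n : ℕ}
    (s : Finset β) (f : β → L.BoundedFormula α n) (v : α → M) (v' : Fin n → M) :
    (iInfF s f).Realize v v' ↔ ∀ b ∈ s, (f b).Realize v v' := by
  simp [iInfF]

end S16


/-- For every `a ∈ M`, `crd(a) ⊆ dcl_{R^eq}(a)`. -/

theorem statement16 (L : FirstOrder.Language.{0,0}) (M : Type) [L.Structure M]
    (hcount : Countable M) (hbin : Paper.BinaryLanguage L) (hhom : Paper.Homogeneous L M)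
    (hsimple : Paper.SimpleTheory L (L.completeTheory M))
    (h1b : Paper.OneBasedStructure L M)
    (hsing : ∀ a b : M, Paper.acl L M {a} = Paper.acl L M {b} → a = b)
    (LR : FirstOrder.Language.{0,0}) (R : Type) [LR.Structure R]
    (hR : Paper.IsBinaryRandom LR R)
    (LeqR : FirstOrder.Language.{0,0}) (MeqR : Type) [LeqR.Structure MeqR]
    (inclR : R → MeqR) (SortIdx : Type) (sortOf : MeqR → SortIdx)
    (heqR : Paper.IsEqExtension LR R LeqR MeqR inclR SortIdx sortOf)
    (j : M → MeqR) (hjinj : Function.Injective j)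
    (hjdef : Paper.ZDefSet LeqR MeqR (Set.range j))
    (hjred : ∀ (n : ℕ) (a b : Fin n → M),
      Paper.SameType LeqR MeqR (j ∘ a) (j ∘ b) → Paper.SameType L M a b)
    (hdcl : ∀ a : M,
      j a ∈ Paper.dcl LeqR MeqR (Paper.acl LeqR MeqR {j a} ∩ Set.range inclR))
    -- the rigidity lemma
    (hrigid : ∀ (a : M) (m : ℕ) (b : Fin m → R), Function.Injective b →
      Set.range (inclR ∘ b) = Paper.acl LeqR MeqR {j a} ∩ Set.range inclR →
      ∀ π : Equiv.Perm (Fin m), π ≠ 1 → ¬ Paper.SameType LR R b (b ∘ π)) :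
    ∀ a : M,
      Paper.acl LeqR MeqR {j a} ∩ Set.range inclR ⊆ Paper.dcl LeqR MeqR {j a} := by
  classical
  intro a x hx
  set p : MeqR := j a with hpdef
  set X : Set MeqR := Paper.acl LeqR MeqR {p} ∩ Set.range inclR with hXdef
  have hx : x ∈ X := hx
  obtain ⟨ρ, hρ⟩ := heqR.real_definable
  set sol : LeqR.Formula (Fin 1 ⊕ Fin 1) → Set MeqR :=
    fun φ => {y | φ.Realize (Sum.elim (fun _ => y) (fun _ => p))} with hsoldef
  -- F1: every element of X lies in a finite p-definable subset of X
  have F1 : ∀ u ∈ X, ∃ φ : LeqR.Formula (Fin 1 ⊕ Fin 1),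
      u ∈ sol φ ∧ (sol φ).Finite ∧ sol φ ⊆ X := by
    intro u hu
    obtain ⟨φ₀, hφ₀u, hφ₀fin⟩ := S16.acl_one hu.1
    set ρ' : LeqR.Formula (Fin 1 ⊕ Fin 1) :=
      ρ.relabel (fun _ : Fin 1 => (Sum.inl 0 : Fin 1 ⊕ Fin 1)) with hρ'def
    have hsol : ∀ y : MeqR, y ∈ sol (φ₀ ⊓ ρ') ↔
        (φ₀.Realize (Sum.elim (fun _ => y) (fun _ => p)) ∧ y ∈ Set.range inclR) := by
      intro y
      show (φ₀ ⊓ ρ').Realize _ ↔ _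
      rw [Formula.realize_inf, hρ'def, Formula.realize_relabel]
      have : (Sum.elim (fun _ : Fin 1 => y) (fun _ : Fin 1 => p)) ∘
          (fun _ : Fin 1 => (Sum.inl 0 : Fin 1 ⊕ Fin 1)) = fun _ : Fin 1 => y := rfl
      rw [this, ← hρ y]
    refine ⟨φ₀ ⊓ ρ', (hsol u).2 ⟨hφ₀u, hu.2⟩, ?_, ?_⟩
    · apply hφ₀fin.subset
      intro y hy
      exact ((hsol y).1 hy).1
    · intro y hy
      obtain ⟨h1, h2⟩ := (hsol y).1 hy
      refine ⟨⟨1, fun _ => p, fun i => rfl, φ₀, h1, hφ₀fin⟩, h2⟩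
  -- F2: X is finite
  obtain ⟨m₀, c, hcX, θ, hθ⟩ := hdcl a
  have hcr : ∀ i, ∃ y : R, inclR y = c i := fun i => (hcX i).2
  choose ct hct using hcr
  have hXfin : X.Finite := by
    rw [hXdef]
    refine S16.crd_finite hR.1 hR.2.2.1 heqR.incl_inj heqR.conservative p ct θ ?_
    have : inclR ∘ ct = c := funext hct
    rw [this]
    exact hθ
  -- minimal algebraic formula over p containing x
  have hex : ∃ n : ℕ, ∃ φ : LeqR.Formula (Fin 1 ⊕ Fin 1),
      x ∈ sol φ ∧ (sol φ).Finite ∧ sol φ ⊆ X ∧ (sol φ).ncard = n := by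
    obtain ⟨φ, h1, h2, h3⟩ := F1 x hx
    exact ⟨(sol φ).ncard, φ, h1, h2, h3, rfl⟩
  obtain ⟨φm, hm1, hm2, hm3, hm4⟩ := Nat.find_spec hex
  by_cases hsingle : sol φm = {x}
  · exact ⟨1, fun _ => p, fun i => rfl, φm, hsingle⟩
  exfalso
  have hx'ex : ∃ x' ∈ sol φm, x' ≠ x := by
    by_contra h
    push_neg at h
    exact hsingle (Set.eq_singleton_iff_unique_mem.mpr ⟨hm1, h⟩)
  obtain ⟨x', hx'm, hx'ne⟩ := hx'ex
  -- x and x' have the same type over p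
  have star : ∀ ψ : LeqR.Formula (Fin 1 ⊕ Fin 1),
      ψ.Realize (Sum.elim (fun _ => x) (fun _ => p)) ↔
      ψ.Realize (Sum.elim (fun _ => x') (fun _ => p)) := by
    have key : ∀ ψ : LeqR.Formula (Fin 1 ⊕ Fin 1),
        ψ.Realize (Sum.elim (fun _ => x) (fun _ => p)) →
        ψ.Realize (Sum.elim (fun _ => x') (fun _ => p)) := by
      intro ψ hψ
      have hsub : sol (φm ⊓ ψ) ⊆ sol φm := fun y hy => (Formula.realize_inf.1 hy).1
      have hmem : x ∈ sol (φm ⊓ ψ) := Formula.realize_inf.2 ⟨hm1, hψ⟩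
      have hfin : (sol (φm ⊓ ψ)).Finite := hm2.subset hsub
      have hsubX : sol (φm ⊓ ψ) ⊆ X := fun y hy => hm3 (hsub hy)
      have hge : Nat.find hex ≤ (sol (φm ⊓ ψ)).ncard :=
        Nat.find_min' hex ⟨φm ⊓ ψ, hmem, hfin, hsubX, rfl⟩
      have heq : sol (φm ⊓ ψ) = sol φm :=
        Set.eq_of_subset_of_ncard_le hsub (by rw [hm4]; exact hge) hm2
      have : x' ∈ sol (φm ⊓ ψ) := heq ▸ hx'm
      exact (Formula.realize_inf.1 this).2
    intro ψ
    constructor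
    · exact key ψ
    · intro h
      by_contra hn
      exact (Formula.realize_not.1 (key ψ.not (Formula.realize_not.2 hn))) h
  have hx'X : x' ∈ X := hm3 hx'm
  -- enumerate X
  set Xt : Set R := {y : R | inclR y ∈ X} with hXtdef
  have hXtfin : Xt.Finite := Set.Finite.preimage (heqR.incl_inj.injOn) hXfin
  set m : ℕ := hXtfin.toFinset.card with hmdef
  set eX := hXtfin.toFinset.equivFin with heXdef
  set b : Fin m → R := fun i => (eX.symm i).val with hbdef
  have hbinj : Function.Injective b := by
    intro i i' hii
    exact eX.symm.injective (Subtype.ext hii)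
  have hrangeb : Set.range b = Xt := by
    ext z
    constructor
    · rintro ⟨i, rfl⟩
      have := (eX.symm i).prop
      rwa [hXtfin.mem_toFinset] at this
    · intro hz
      refine ⟨eX ⟨z, hXtfin.mem_toFinset.mpr hz⟩, ?_⟩
      rw [hbdef]
      simp
  have hrange : Set.range (inclR ∘ b) = X := by
    rw [Set.range_comp, hrangeb]
    ext u
    constructor
    · rintro ⟨y, hy, rfl⟩
      exact hy
    · intro hu
      obtain ⟨y, hy⟩ := hu.2
      exact ⟨y, by rw [hXtdef]; show inclR y ∈ X; rw [hy]; exact hu, hy⟩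
  -- φX defines X over p
  have F1' : ∀ u : MeqR, ∃ φ : LeqR.Formula (Fin 1 ⊕ Fin 1), u ∈ X →
      (u ∈ sol φ ∧ (sol φ).Finite ∧ sol φ ⊆ X) := by
    intro u
    by_cases hu : u ∈ X
    · obtain ⟨φ, h⟩ := F1 u hu
      exact ⟨φ, fun _ => ⟨h.1, h.2.1, h.2.2⟩⟩
    · exact ⟨⊥, fun h => absurd h hu⟩
  choose α hα using F1'
  set φX : LeqR.Formula (Fin 1 ⊕ Fin 1) := S16.iSupF hXfin.toFinset α with hφXdef
  have hsolX : sol φX = X := by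
    ext y
    have : y ∈ sol φX ↔ ∃ u ∈ hXfin.toFinset, (α u).Realize
        (Sum.elim (fun _ : Fin 1 => y) (fun _ : Fin 1 => p)) := by
      rw [hsoldef]
      show (S16.iSupF hXfin.toFinset α).Realize _ default ↔ _
      rw [S16.realize_iSupF]
      exact Iff.rfl
    rw [this]
    constructor
    · rintro ⟨u, hu, hru⟩
      exact (hα u (hXfin.mem_toFinset.mp hu)).2.2 hru
    · intro hy
      exact ⟨y, hXfin.mem_toFinset.mpr hy, (hα y hy).1⟩
  obtain ⟨i₁, hi₁⟩ : ∃ i, inclR (b i) = x := by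
    have : x ∈ Set.range (inclR ∘ b) := hrange.symm ▸ hx
    exact this
  -- the diagram of b
  haveI : Finite (LR.Relations 1) := hR.1.1.2.1 1
  haveI : Finite (LR.Relations 2) := hR.1.1.2.1 2
  haveI := Fintype.ofFinite (LR.Relations 1)
  haveI := Fintype.ofFinite (LR.Relations 2)
  set lit1 : LR.Relations 1 × Fin m → LR.Formula (Fin m) := fun e =>
    if Structure.RelMap e.1 (fun _ : Fin 1 => b e.2) then e.1.formula (fun _ => Term.var e.2)
    else (e.1.formula (fun _ => Term.var e.2)).not with hlit1def
  set lit2 : LR.Relations 2 × (Fin m × Fin m) → LR.Formula (Fin m) := fun e =>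
    if Structure.RelMap e.1 (fun i : Fin 2 => if i = 0 then b e.2.1 else b e.2.2)
    then e.1.formula (fun i : Fin 2 => if i = 0 then Term.var e.2.1 else Term.var e.2.2)
    else (e.1.formula (fun i : Fin 2 => if i = 0 then Term.var e.2.1 else Term.var e.2.2)).not
    with hlit2def
  set D : LR.Formula (Fin m) :=
    (S16.iInfF Finset.univ lit1) ⊓ (S16.iInfF Finset.univ lit2) with hDdef
  have hterm1 : ∀ (v : Fin m → R) (e : LR.Relations 1 × Fin m),
      ((e.1.formula (fun _ : Fin 1 => Term.var e.2)).Realize v ↔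
        Structure.RelMap e.1 (fun _ : Fin 1 => v e.2)) := by
    intro v e
    rw [Formula.realize_rel]
    exact Iff.rfl
  have hterm2 : ∀ (v : Fin m → R) (e : LR.Relations 2 × (Fin m × Fin m)),
      ((e.1.formula (fun i : Fin 2 => if i = 0 then Term.var e.2.1 else Term.var e.2.2)).Realize v ↔
        Structure.RelMap e.1 (fun i : Fin 2 => if i = 0 then v e.2.1 else v e.2.2)) := by
    intro v e
    rw [Formula.realize_rel]
    have h : ∀ i : Fin 2, Term.realize v
        ((if i = 0 then Term.var e.2.1 else Term.var e.2.2 : LR.Term (Fin m)))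
        = (if i = 0 then v e.2.1 else v e.2.2) := by
      intro i
      by_cases h : i = 0 <;> simp [h, Term.realize]
    exact iff_of_eq (congrArg _ (funext h))
  have hDfacts : ∀ v : Fin m → R, D.Realize v →
      ((∀ (r : LR.Relations 1) (i : Fin m),
          Structure.RelMap r (fun _ : Fin 1 => v i) ↔ Structure.RelMap r (fun _ : Fin 1 => b i)) ∧
        (∀ (r : LR.Relations 2) (i k : Fin m),
          Structure.RelMap r (fun l : Fin 2 => if l = 0 then v i else v k) ↔
          Structure.RelMap r (fun l : Fin 2 => if l = 0 then b i else b k))) := by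
    intro v hv
    obtain ⟨hv1, hv2⟩ := Formula.realize_inf.1 hv
    have hv1' : ∀ e : LR.Relations 1 × Fin m, (lit1 e).Realize v := by
      intro e
      exact (S16.realize_iInfF _ _ _ _).1 hv1 e (Finset.mem_univ _)
    have hv2' : ∀ e : LR.Relations 2 × (Fin m × Fin m), (lit2 e).Realize v := by
      intro e
      exact (S16.realize_iInfF _ _ _ _).1 hv2 e (Finset.mem_univ _)
    constructor
    · intro r i
      have hl := hv1' (r, i)
      simp only [hlit1def] at hl
      by_cases hbr : Structure.RelMap r (fun _ : Fin 1 => b i)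
      · simp only [if_pos hbr] at hl
        exact iff_of_true ((hterm1 v (r, i)).1 hl) hbr
      · simp only [if_neg hbr] at hl
        exact iff_of_false (fun hc => (Formula.realize_not.1 hl) ((hterm1 v (r, i)).2 hc)) hbr
    · intro r i k
      have hl := hv2' (r, (i, k))
      simp only [hlit2def] at hl
      by_cases hbr : Structure.RelMap r (fun l : Fin 2 => if l = 0 then b i else b k)
      · simp only [if_pos hbr] at hl
        exact iff_of_true ((hterm2 v (r, (i, k))).1 hl) hbr
      · simp only [if_neg hbr] at hl
        exact iff_of_false (fun hc => (Formula.realize_not.1 hl) ((hterm2 v (r, (i, k))).2 hc)) hbr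
  have hDb : D.Realize b := by
    rw [hDdef]
    rw [Formula.realize_inf]
    constructor
    · show (S16.iInfF Finset.univ lit1).Realize _ default
      rw [S16.realize_iInfF]
      intro e _
      simp only [hlit1def]
      by_cases hbr : Structure.RelMap e.1 (fun _ : Fin 1 => b e.2)
      · simp only [if_pos hbr]
        exact (hterm1 b e).2 hbr
      · simp only [if_neg hbr]
        exact Formula.realize_not.2 (fun hc => hbr ((hterm1 b e).1 hc))
    · show (S16.iInfF Finset.univ lit2).Realize _ default
      rw [S16.realize_iInfF]
      intro e _
      simp only [hlit2def]
      by_cases hbr : Structure.RelMap e.1 (fun i : Fin 2 => if i = 0 then b e.2.1 else b e.2.2)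
      · simp only [if_pos hbr]
        exact (hterm2 b e).2 hbr
      · simp only [if_neg hbr]
        exact Formula.realize_not.2 (fun hc => hbr ((hterm2 b e).1 hc))
  obtain ⟨ψD, hψD⟩ := heqR.expansion m D
  -- the big formula
  set Ψ₁ : LeqR.Formula ((Fin 1 ⊕ Fin 1) ⊕ Fin m) := S16.iInfF Finset.univ
    (fun e : Fin m × Fin m => if e.1 = e.2 then ⊤ else
      (Term.equal (Term.var (Sum.inr e.1)) (Term.var (Sum.inr e.2))).not) with hΨ₁def
  set Ψ₂ : LeqR.Formula ((Fin 1 ⊕ Fin 1) ⊕ Fin m) := S16.iInfF Finset.univ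
    (fun i : Fin m => φX.relabel (Sum.elim (fun _ : Fin 1 => Sum.inr i)
      (fun _ : Fin 1 => Sum.inl (Sum.inr 0)))) with hΨ₂def
  set gX : (Fin 1 ⊕ Fin 1) → (((Fin 1 ⊕ Fin 1) ⊕ Fin m) ⊕ Fin 1) :=
    Sum.elim (fun _ => Sum.inr 0) (fun _ => Sum.inl (Sum.inl (Sum.inr 0))) with hgXdef
  set Ψ₃ : LeqR.Formula ((Fin 1 ⊕ Fin 1) ⊕ Fin m) := Formula.iAlls
    (Fin 1)
    ((φX.relabel gX).imp (S16.iSupF Finset.univ (fun i : Fin m =>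
      Term.equal (Term.var (Sum.inr 0)) (Term.var (Sum.inl (Sum.inr i)))))) with hΨ₃def
  set Ψ₄ : LeqR.Formula ((Fin 1 ⊕ Fin 1) ⊕ Fin m) :=
    Term.equal (Term.var (Sum.inl (Sum.inl 0))) (Term.var (Sum.inr i₁)) with hΨ₄def
  set Ψ₅ : LeqR.Formula ((Fin 1 ⊕ Fin 1) ⊕ Fin m) := ψD.relabel Sum.inr with hΨ₅def
  set Ψ : LeqR.Formula ((Fin 1 ⊕ Fin 1) ⊕ Fin m) := (((Ψ₁ ⊓ Ψ₂) ⊓ Ψ₃) ⊓ Ψ₄) ⊓ Ψ₅ with hΨdef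
  set χf : LeqR.Formula (Fin 1 ⊕ Fin 1) := Formula.iExs
    (Fin m) Ψ with hχfdef
  -- χf is realized at (x, p)
  have hreal : χf.Realize (Sum.elim (fun _ => x) (fun _ => p)) := by
    rw [hχfdef, Formula.realize_iExs]
    refine ⟨inclR ∘ b, ?_⟩
    show Ψ.Realize (Sum.elim (Sum.elim (fun _ => x) (fun _ => p)) (inclR ∘ b))
    set W : ((Fin 1 ⊕ Fin 1) ⊕ Fin m) → MeqR :=
      Sum.elim (Sum.elim (fun _ => x) (fun _ => p)) (inclR ∘ b) with hWdef
    rw [hΨdef, Formula.realize_inf, Formula.realize_inf, Formula.realize_inf,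
      Formula.realize_inf]
    refine ⟨⟨⟨⟨?_, ?_⟩, ?_⟩, ?_⟩, ?_⟩
    · show (S16.iInfF Finset.univ _).Realize _ default
      rw [S16.realize_iInfF]
      rintro ⟨i, k⟩ _
      by_cases hik : i = k
      · simp only [if_pos hik]
        exact Formula.realize_top.2 trivial
      · simp only [if_neg hik]
        refine Formula.realize_not.2 ?_
        rw [Formula.realize_equal]
        intro hc
        exact hik (hbinj (heqR.incl_inj hc))
    · show (S16.iInfF Finset.univ _).Realize _ default
      rw [S16.realize_iInfF]
      intro i _
      show (φX.relabel (Sum.elim (fun _ : Fin 1 => Sum.inr i)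
        (fun _ : Fin 1 => Sum.inl (Sum.inr 0)) : (Fin 1 ⊕ Fin 1) → ((Fin 1 ⊕ Fin 1) ⊕ Fin m))).Realize W
      rw [Formula.realize_relabel]
      have : W ∘ (Sum.elim (fun _ : Fin 1 => Sum.inr i)
          (fun _ : Fin 1 => Sum.inl (Sum.inr 0)) : (Fin 1 ⊕ Fin 1) → ((Fin 1 ⊕ Fin 1) ⊕ Fin m))
          = Sum.elim (fun _ => inclR (b i)) (fun _ => p) := by
        funext s
        rcases s with s | s <;> rfl
      rw [this]
      have : inclR (b i) ∈ sol φX := by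
        rw [hsolX, ← hrange]
        exact ⟨i, rfl⟩
      exact this
    · rw [hΨ₃def, Formula.realize_iAlls]
      intro iu
      show ((φX.relabel gX).imp _).Realize (Sum.elim W iu)
      rw [Formula.realize_imp, Formula.realize_relabel]
      intro hu
      have hcomp : (Sum.elim W iu) ∘ gX = Sum.elim (fun _ : Fin 1 => iu 0) (fun _ : Fin 1 => p) := by
        funext s
        rcases s with s | s
        · simp only [hgXdef, Function.comp_apply, Sum.elim_inl, Sum.elim_inr]
        · simp only [hgXdef, Function.comp_apply, Sum.elim_inl, Sum.elim_inr]
          rfl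
      rw [hcomp] at hu
      have : iu 0 ∈ X := by rw [← hsolX]; exact hu
      rw [← hrange] at this
      obtain ⟨k, hk⟩ := this
      show (S16.iSupF Finset.univ _).Realize _ default
      rw [S16.realize_iSupF]
      refine ⟨k, Finset.mem_univ _, ?_⟩
      show (Term.equal (Term.var (Sum.inr 0)) (Term.var (Sum.inl (Sum.inr k))) :
        LeqR.Formula ((((Fin 1 ⊕ Fin 1) ⊕ Fin m) ⊕ Fin 1))).Realize (Sum.elim W iu)
      rw [Formula.realize_equal]
      exact hk.symm
    · rw [hΨ₄def, Formula.realize_equal]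
      show x = inclR (b i₁)
      exact hi₁.symm
    · rw [hΨ₅def, Formula.realize_relabel]
      show ψD.Realize (W ∘ Sum.inr)
      have : W ∘ Sum.inr = inclR ∘ b := rfl
      rw [this]
      exact (hψD b).1 hDb
  -- transfer to (x', p) and unpack
  rw [star, hχfdef, Formula.realize_iExs] at hreal
  obtain ⟨d', hd'⟩ := hreal
  have hd' : Ψ.Realize (Sum.elim (Sum.elim (fun _ => x') (fun _ => p)) d') := hd'
  set W' : ((Fin 1 ⊕ Fin 1) ⊕ Fin m) → MeqR :=
    Sum.elim (Sum.elim (fun _ => x') (fun _ => p)) d' with hW'def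
  rw [hΨdef, Formula.realize_inf, Formula.realize_inf, Formula.realize_inf,
    Formula.realize_inf] at hd'
  obtain ⟨⟨⟨⟨hd1, hd2⟩, hd3⟩, hd4⟩, hd5⟩ := hd'
  have f1 : ∀ i k : Fin m, i ≠ k → d' i ≠ d' k := by
    intro i k hik
    have := (S16.realize_iInfF _ _ _ _).1 hd1 (i, k) (Finset.mem_univ _)
    simp only [if_neg hik] at this
    have := Formula.realize_not.1 this
    rw [Formula.realize_equal] at this
    exact this
  have f2 : ∀ i : Fin m, d' i ∈ X := by
    intro i
    have this0 := (S16.realize_iInfF _ _ _ _).1 hd2 i (Finset.mem_univ _)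
    have this : (φX.relabel (Sum.elim (fun _ : Fin 1 => Sum.inr i)
        (fun _ : Fin 1 => Sum.inl (Sum.inr 0)) : (Fin 1 ⊕ Fin 1) → ((Fin 1 ⊕ Fin 1) ⊕ Fin m))).Realize W' := this0
    rw [Formula.realize_relabel] at this
    have hcomp : W' ∘ (Sum.elim (fun _ : Fin 1 => Sum.inr i)
        (fun _ : Fin 1 => Sum.inl (Sum.inr 0)) : (Fin 1 ⊕ Fin 1) → ((Fin 1 ⊕ Fin 1) ⊕ Fin m))
        = Sum.elim (fun _ => d' i) (fun _ => p) := by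
      funext s
      rcases s with s | s <;> rfl
    rw [hcomp] at this
    rw [← hsolX]
    exact this
  have f3 : ∀ u ∈ X, ∃ k, d' k = u := by
    intro u hu
    rw [hΨ₃def, Formula.realize_iAlls] at hd3
    have := hd3 (fun _ => u)
    have h3 : ((φX.relabel gX).imp (S16.iSupF Finset.univ (fun i : Fin m =>
        Term.equal (Term.var (Sum.inr 0)) (Term.var (Sum.inl (Sum.inr i)))))).Realize
        (Sum.elim W' (fun _ => u)) := this
    rw [Formula.realize_imp, Formula.realize_relabel] at h3
    have hcomp : (Sum.elim W' (fun _ : Fin 1 => u)) ∘ gX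
        = Sum.elim (fun _ : Fin 1 => u) (fun _ : Fin 1 => p) := by
      funext s
      rcases s with s | s
      · rfl
      · rfl
    rw [hcomp] at h3
    have h4 := h3 (show u ∈ sol φX by rw [hsolX]; exact hu)
    have h5 := (S16.realize_iSupF Finset.univ (fun i : Fin m =>
        Term.equal (Term.var (Sum.inr 0)) (Term.var (Sum.inl (Sum.inr i))))
        (Sum.elim W' (fun _ => u)) default).1 h4
    obtain ⟨k, _, hk⟩ := h5
    have hk' : (Term.equal (Term.var (Sum.inr 0)) (Term.var (Sum.inl (Sum.inr k))) :
        LeqR.Formula ((((Fin 1 ⊕ Fin 1) ⊕ Fin m) ⊕ Fin 1))).Realize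
        (Sum.elim W' (fun _ => u)) := hk
    rw [Formula.realize_equal] at hk'
    exact ⟨k, hk'.symm⟩
  have f4 : x' = d' i₁ := by
    rw [hΨ₄def, Formula.realize_equal] at hd4
    exact hd4
  have f5 : ψD.Realize d' := by
    rw [hΨ₅def, Formula.realize_relabel] at hd5
    exact hd5
  -- obtain the permuted enumeration
  have hd'r : ∀ i, ∃ y : R, inclR y = d' i := fun i => (f2 i).2
  choose b' hb' using hd'r
  have hDb' : D.Realize b' := by
    rw [hψD b']
    have : inclR ∘ b' = d' := funext hb'
    rw [this]
    exact f5
  obtain ⟨facts1, facts2⟩ := hDfacts b' hDb'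
  have hb'inj : Function.Injective b' := by
    intro i k h
    by_contra hne
    exact f1 i k hne (by rw [← hb' i, ← hb' k, h])
  have hXd : X = Set.range d' := by
    apply Set.Subset.antisymm
    · intro u hu
      obtain ⟨k, hk⟩ := f3 u hu
      exact ⟨k, hk⟩
    · rintro _ ⟨i, rfl⟩
      exact f2 i
  have hrangeb' : Set.range b' = Set.range b := by
    apply Set.image_injective.mpr heqR.incl_inj
    rw [← Set.range_comp, ← Set.range_comp]
    have h1 : inclR ∘ b' = d' := funext hb'
    rw [h1, hrange]
    exact hXd.symm
  have hbr : ∀ i, ∃ k, b k = b' i := by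
    intro i
    have : b' i ∈ Set.range b := by rw [← hrangeb']; exact ⟨i, rfl⟩
    exact this
  choose π₀ hπ₀ using hbr
  have hπ₀inj : Function.Injective π₀ := by
    intro i k h
    apply hb'inj
    rw [← hπ₀ i, ← hπ₀ k, h]
  set π : Equiv.Perm (Fin m) := Equiv.ofBijective π₀ (Finite.injective_iff_bijective.mp hπ₀inj)
    with hπdef
  have hπapp : ∀ i, b (π i) = b' i := fun i => hπ₀ i
  have hπne : π ≠ 1 := by
    intro h
    have h2 : b' i₁ = b i₁ := by
      rw [← hπapp i₁, h]
      rfl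
    apply hx'ne
    rw [f4, ← hb' i₁, h2, hi₁]
  set fb := Equiv.ofInjective b hbinj with hfbdef
  set σ : Equiv.Perm R := π.extendDomain fb with hσdef
  have hσb : ∀ i, σ (b i) = b' i := by
    intro i
    have h1 : σ ((fb i : R)) = (fb (π i) : R) := Equiv.Perm.extendDomain_apply_image π fb i
    have h2 : (fb i : R) = b i := rfl
    have h3 : (fb (π i) : R) = b (π i) := rfl
    rw [h2, h3] at h1
    rw [h1, hπapp]
  have hrelσ : ∀ (n : ℕ) (r : LR.Relations n) (w : Fin n → R), (∀ i, w i ∈ Set.range b) →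
      (Structure.RelMap r (⇑σ ∘ w) ↔ Structure.RelMap r w) := by
    intro n r w hw
    choose t ht using hw
    match n, r, w, t, ht with
    | 0, r, w, t, ht =>
      have : ⇑σ ∘ w = w := funext fun i => i.elim0
      rw [this]
    | 1, r, w, t, ht =>
      have hw1 : w = fun _ : Fin 1 => b (t 0) := funext fun i => by
        rw [Subsingleton.elim i 0]; exact (ht 0).symm
      have hσw : ⇑σ ∘ w = fun _ : Fin 1 => b' (t 0) := by
        funext i
        show σ (w i) = b' (t 0)
        rw [Subsingleton.elim i 0, ← ht 0, hσb]
      rw [hσw, hw1]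
      exact facts1 r (t 0)
    | 2, r, w, t, ht =>
      have hw1 : w = fun l : Fin 2 => if l = 0 then b (t 0) else b (t 1) := by
        funext l
        by_cases hl : l = 0
        · subst hl
          rw [if_pos rfl, ht 0]
        · have hl1 : l = 1 := by
            have h2 := l.isLt
            apply Fin.ext
            have : l.val ≠ 0 := fun h => hl (Fin.ext h)
            omega
          subst hl1
          rw [if_neg hl, ht 1]
      have hσw : ⇑σ ∘ w = fun l : Fin 2 => if l = 0 then b' (t 0) else b' (t 1) := by
        funext l
        show σ (w l) = _
        by_cases hl : l = 0
        · subst hl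
          rw [if_pos rfl, ← ht 0, hσb]
        · have hl1 : l = 1 := by
            have h2 := l.isLt
            apply Fin.ext
            have : l.val ≠ 0 := fun h => hl (Fin.ext h)
            omega
          subst hl1
          rw [if_neg hl, ← ht 1, hσb]
      rw [hσw, hw1]
      exact facts2 r (t 0) (t 1)
    | (n+3), r, w, t, ht => exact ((hR.1.2 (n+3) (by omega)).elim r)
  obtain ⟨g, hg⟩ := S16.auto_extend hR.1.1.1 hR.2.2.1 σ (Set.range b) (Set.finite_range b) hrelσ
  have hgb : ⇑g ∘ b = b' := funext fun i => by
    show g (b i) = b' i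
    rw [hg (b i) ⟨i, rfl⟩, hσb]
  have hsame : Paper.SameType LR R b (b ∘ ⇑π) := by
    intro φ
    have h1 : φ.Realize (⇑g ∘ b) ↔ φ.Realize b := StrongHomClass.realize_formula g φ
    rw [hgb] at h1
    have h2 : b ∘ ⇑π = b' := funext fun i => hπapp i
    rw [h2]
    exact h1.symm
  exact hrigid a m b hbinj hrange π hπne hsame
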